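/- Almost surely, limsup_{n→∞} l(n)/log n ≤ 1/λ_*. -/

import Mathlib

set_option linter.unusedSectionVars false
set_option linter.unusedVariables false


open MeasureTheory ProbabilityTheory Filter
open scoped ENNReal

noncomputable section

/-- The random walk `S_n = X_1 + ... + X_n` in `ℤ^d`, with `S_0 = 0`. -/
def walk (d : ℕ) {Ω : Type*} (X : ℕ → Ω → (Fin d → ℤ)) (n : ℕ) (ω : Ω) : Fin d → ℤ :=
  ∑ i ∈ Finset.range n, X i ω

/-- The local time `l(n,x) = Σ_{i=0}^n 1{S_i = x}` of the site `x` up to time `n`. -/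
def localTime (d : ℕ) {Ω : Type*} (X : ℕ → Ω → (Fin d → ℤ)) (n : ℕ) (x : Fin d → ℤ)
    (ω : Ω) : ℕ :=
  ∑ i ∈ Finset.range (n + 1), if walk d X i ω = x then 1 else 0

/-- `γ = P(S_n ≠ 0 for all n ≥ 1)`, the probability of no return to the origin. -/
def noReturnProb (d : ℕ) {Ω : Type*} [MeasurableSpace Ω] (μ : Measure Ω)
    (X : ℕ → Ω → (Fin d → ℤ)) : ℝ :=
  (μ {ω | ∀ n : ℕ, 1 ≤ n → walk d X n ω ≠ 0}).toReal

/-- The maximal local time `l(n) = max{l(n,x) : x ∈ ℤ^d}`; the maximum over all of `ℤ^d`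
is attained at a visited site `S_i`, `0 ≤ i ≤ n` (elsewhere the local time is `0`). -/
def maxLocalTime (d : ℕ) {Ω : Type*} (X : ℕ → Ω → (Fin d → ℤ)) (n : ℕ) (ω : Ω) : ℕ :=
  (Finset.range (n + 1)).sup fun i => localTime d X n (walk d X i ω) ω

namespace Stmt10Aux

variable {Ω : Type*} [MeasurableSpace Ω] {d : ℕ}

/-- Sum of increments: `W X t m ω = S_{t+m} - S_t`. -/
def W (X : ℕ → Ω → (Fin d → ℤ)) (t m : ℕ) (ω : Ω) : Fin d → ℤ :=
  ∑ i ∈ Finset.range m, X (t + i) ω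

lemma walk_add_W (X : ℕ → Ω → (Fin d → ℤ)) {t s : ℕ} (h : t ≤ s) (ω : Ω) :
    walk d X s ω = walk d X t ω + W X t (s - t) ω := by
  unfold walk W
  rw [← Finset.sum_range_add_sum_Ico _ h, Finset.sum_Ico_eq_sum_range]

lemma W_sub (X : ℕ → Ω → (Fin d → ℤ)) {t s u : ℕ} (hts : t ≤ s) (hsu : s ≤ u) (ω : Ω) :
    W X s (u - s) ω = W X t (u - t) ω - W X t (s - t) ω := by
  have h1 := walk_add_W X hts ω
  have h2 := walk_add_W X hsu ω
  have h3 := walk_add_W X (hts.trans hsu) ω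
  rw [h1] at h2
  rw [h3] at h2
  have h4 : W X t (u - t) ω = W X t (s - t) ω + W X s (u - s) ω := by
    apply add_left_cancel (a := walk d X t ω)
    rw [h2, add_assoc]
  rw [h4]
  abel

lemma measurable_W (X : ℕ → Ω → (Fin d → ℤ)) (hmeas : ∀ i, Measurable (X i)) (t m : ℕ) :
    Measurable (W X t m) :=
  Finset.measurable_sum _ fun i _ => hmeas _

lemma measurable_walk (X : ℕ → Ω → (Fin d → ℤ)) (hmeas : ∀ i, Measurable (X i)) (m : ℕ) :
    Measurable (walk d X m) :=
  Finset.measurable_sum _ fun i _ => hmeas _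

/-- Number of `s ∈ (t, n]` with `S_s = S_t`. -/
def hitCount (X : ℕ → Ω → (Fin d → ℤ)) (t n : ℕ) (ω : Ω) : ℕ :=
  ((Finset.Ioc t n).filter fun s => W X t (s - t) ω = 0).card

/-- At least `j` hits of the site `S_t` in `(t, n]`. -/
def DSet (X : ℕ → Ω → (Fin d → ℤ)) (t j n : ℕ) : Set Ω := {ω | j ≤ hitCount X t n ω}

/-- `s` is the first time after `t` at which the walk returns to `S_t`. -/
def FSet (X : ℕ → Ω → (Fin d → ℤ)) (t s : ℕ) : Set Ω :=
  {ω | W X t (s - t) ω = 0 ∧ ∀ u ∈ Finset.Ioo t s, W X t (u - t) ω ≠ 0}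

lemma measurableSet_FSet (X : ℕ → Ω → (Fin d → ℤ)) (hmeas : ∀ i, Measurable (X i)) (t s : ℕ) :
    MeasurableSet (FSet X t s) := by
  have h : FSet X t s =
      (W X t (s - t)) ⁻¹' {0} ∩ ⋂ u ∈ Finset.Ioo t s, ((W X t (u - t)) ⁻¹' {0})ᶜ := by
    ext ω
    simp [FSet]
  rw [h]
  exact ((measurable_W X hmeas t (s - t)) (measurableSet_singleton 0)).inter
    (MeasurableSet.biInter (Finset.Ioo t s).countable_toSet fun u _ =>
      ((measurable_W X hmeas t (u - t)) (measurableSet_singleton 0)).compl)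

/-- extension of a vector indexed by a finset to a function on `ℕ`. -/
def ext {S : Finset ℕ} (v : ↥S → (Fin d → ℤ)) (i : ℕ) : Fin d → ℤ :=
  if h : i ∈ S then v ⟨i, h⟩ else 0

lemma W_eq_sum_ext (X : ℕ → Ω → (Fin d → ℤ)) {S : Finset ℕ} (t m : ℕ)
    (hsub : ∀ i < m, t + i ∈ S) (ω : Ω) :
    W X t m ω = ∑ i ∈ Finset.range m, ext (fun j : ↥S => X j ω) (t + i) := by
  refine Finset.sum_congr rfl fun i hi => ?_
  rw [ext, dif_pos (hsub i (Finset.mem_range.mp hi))]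

lemma FSet_eq_preimage (X : ℕ → Ω → (Fin d → ℤ)) (t s : ℕ) :
    FSet X t s = (fun ω (i : ↥(Finset.Ico t s)) => X i ω) ⁻¹'
      {v | (∑ i ∈ Finset.range (s - t), ext v (t + i)) = 0 ∧
        ∀ u ∈ Finset.Ioo t s, (∑ i ∈ Finset.range (u - t), ext v (t + i)) ≠ 0} := by
  ext ω
  have h1 : ∀ m, (∀ i < m, t + i ∈ Finset.Ico t s) →
      W X t m ω = ∑ i ∈ Finset.range m, ext (fun j : ↥(Finset.Ico t s) => X j ω) (t + i) :=
    fun m h => W_eq_sum_ext X t m h ω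
  simp only [FSet, Set.mem_setOf_eq, Set.mem_preimage]
  rw [← h1 (s - t) (fun i (hi : i < s - t) => by rw [Finset.mem_Ico]; omega)]
  refine and_congr Iff.rfl (forall₂_congr fun u hu => ?_)
  rw [Finset.mem_Ioo] at hu
  rw [← h1 (u - t) (fun i (hi : i < u - t) => by rw [Finset.mem_Ico]; omega)]

lemma DSet_eq_preimage (X : ℕ → Ω → (Fin d → ℤ)) (t j n : ℕ) :
    DSet X t j n = (fun ω (i : ↥(Finset.Ico t n)) => X i ω) ⁻¹'
      {v | j ≤ ((Finset.Ioc t n).filter fun s =>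
        (∑ i ∈ Finset.range (s - t), ext v (t + i)) = 0).card} := by
  ext ω
  simp only [DSet, hitCount, Set.mem_setOf_eq, Set.mem_preimage]
  have h : ∀ s ∈ Finset.Ioc t n, ((W X t (s - t) ω = 0) ↔
      ((∑ i ∈ Finset.range (s - t),
        ext (fun j : ↥(Finset.Ico t n) => X j ω) (t + i)) = 0)) := by
    intro s hs
    rw [Finset.mem_Ioc] at hs
    rw [W_eq_sum_ext X (S := Finset.Ico t n) t (s - t)
      (fun i (hi : i < s - t) => by rw [Finset.mem_Ico]; omega) ω]
  rw [Finset.filter_congr h]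

lemma mu_FD {μ : Measure Ω} (X : ℕ → Ω → (Fin d → ℤ))
    (hindep : iIndepFun X μ) (hmeas : ∀ i, Measurable (X i))
    (t s j n : ℕ) :
    μ (FSet X t s ∩ DSet X s j n) = μ (FSet X t s) * μ (DSet X s j n) := by
  have hInd := hindep.indepFun_finset (Finset.Ico t s) (Finset.Ico s n)
    (Finset.Ico_disjoint_Ico_consecutive t s n) hmeas
  rw [FSet_eq_preimage, DSet_eq_preimage]
  exact hInd.measure_inter_preimage_eq_mul _ _
    ((Set.to_countable _).measurableSet) ((Set.to_countable _).measurableSet)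

lemma map_vec {μ : Measure Ω} [IsProbabilityMeasure μ] (X : ℕ → Ω → (Fin d → ℤ))
    (hmeas : ∀ i, Measurable (X i)) (hindep : iIndepFun X μ)
    (hident : ∀ i, μ.map (X i) = μ.map (X 0)) (t M : ℕ) :
    μ.map (fun ω (i : Fin M) => X (t + i) ω) = Measure.pi (fun _ : Fin M => μ.map (X 0)) := by
  have hvm : Measurable (fun ω (i : Fin M) => X (t + i) ω) :=
    measurable_pi_lambda _ fun i => hmeas _
  have hprob : IsProbabilityMeasure (μ.map (X 0)) :=
    Measure.isProbabilityMeasure_map (hmeas 0).aemeasurable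
  symm
  refine Measure.pi_eq fun s hs => ?_
  rw [Measure.map_apply hvm (MeasurableSet.univ_pi hs)]
  set s' : ℕ → Set (Fin d → ℤ) := fun j => if h : j < M then s ⟨j, h⟩ else Set.univ with hs'
  have hs'meas : ∀ j, MeasurableSet (s' j) := by
    intro j
    by_cases h : j < M
    · simp only [hs', dif_pos h]; exact hs _
    · simp only [hs', dif_neg h]; exact MeasurableSet.univ
  have hs'eq : ∀ (i : Fin M), s' i = s i := by
    intro i
    simp only [hs', dif_pos i.isLt, Fin.eta]
  have hpre : (fun ω (i : Fin M) => X (t + i) ω) ⁻¹' Set.univ.pi s =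
      ⋂ k ∈ Finset.image (fun j => t + j) (Finset.range M), X k ⁻¹' (s' (k - t)) := by
    ext ω
    simp only [Set.mem_preimage, Set.mem_univ_pi, Set.mem_iInter, Finset.mem_image,
      Finset.mem_range]
    constructor
    · rintro h k ⟨j, hj, rfl⟩
      rw [Nat.add_sub_cancel_left]
      have := h ⟨j, hj⟩
      rwa [← hs'eq ⟨j, hj⟩] at this
    · intro h i
      have := h (t + i) ⟨i, i.isLt, rfl⟩
      rw [Nat.add_sub_cancel_left] at this
      rwa [hs'eq i] at this
  rw [hpre, hindep.measure_inter_preimage_eq_mul _ (fun k _ => hs'meas (k - t)),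
    Finset.prod_image (fun a _ b _ h => by omega)]
  have hfac : ∀ j ∈ Finset.range M, μ (X (t + j) ⁻¹' s' ((t + j) - t)) = μ.map (X 0) (s' j) := by
    intro j _
    rw [Nat.add_sub_cancel_left, ← Measure.map_apply (hmeas _) (hs'meas j), hident]
  rw [Finset.prod_congr rfl hfac, ← Fin.prod_univ_eq_prod_range (fun j => μ.map (X 0) (s' j))]
  exact Finset.prod_congr rfl fun i _ => by rw [hs'eq i]

lemma measure_preimage_vec {μ : Measure Ω} [IsProbabilityMeasure μ] (X : ℕ → Ω → (Fin d → ℤ))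
    (hmeas : ∀ i, Measurable (X i)) (hindep : iIndepFun X μ)
    (hident : ∀ i, μ.map (X i) = μ.map (X 0)) (t M : ℕ) (B : Set (Fin M → (Fin d → ℤ))) :
    μ ((fun ω (i : Fin M) => X (t + i) ω) ⁻¹' B) =
      μ ((fun ω (i : Fin M) => X (0 + i) ω) ⁻¹' B) := by
  have hB : MeasurableSet B := (Set.to_countable B).measurableSet
  rw [← Measure.map_apply (measurable_pi_lambda _ fun i => hmeas _) hB,
    ← Measure.map_apply (measurable_pi_lambda _ fun i => hmeas _) hB,
    map_vec X hmeas hindep hident t M, map_vec X hmeas hindep hident 0 M]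

/-- The no-return event. -/
def noRet (X : ℕ → Ω → (Fin d → ℤ)) : Set Ω := {ω | ∀ n : ℕ, 1 ≤ n → walk d X n ω ≠ 0}

lemma measurableSet_noRet (X : ℕ → Ω → (Fin d → ℤ)) (hmeas : ∀ i, Measurable (X i)) :
    MeasurableSet (noRet X) := by
  have h : noRet X = ⋂ m : ℕ, {ω | 1 ≤ m → walk d X m ω ≠ 0} := by
    ext ω; simp [noRet]
  rw [h]
  refine MeasurableSet.iInter fun m => ?_
  by_cases h1 : 1 ≤ m
  · have : {ω | 1 ≤ m → walk d X m ω ≠ 0} = (walk d X m) ⁻¹' ({0}ᶜ) := by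
      ext ω; simp [h1]
    rw [this]
    exact (measurable_walk X hmeas m) (measurableSet_singleton 0).compl
  · have : {ω | 1 ≤ m → walk d X m ω ≠ 0} = Set.univ := by
      ext ω; simp [h1]
    rw [this]; exact MeasurableSet.univ

lemma mu_DSet_one_le {μ : Measure Ω} [IsProbabilityMeasure μ] (X : ℕ → Ω → (Fin d → ℤ))
    (hmeas : ∀ i, Measurable (X i)) (hindep : iIndepFun X μ)
    (hident : ∀ i, μ.map (X i) = μ.map (X 0)) (t n : ℕ) :
    μ (DSet X t 1 n) ≤ 1 - μ (noRet X) := by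
  set M := n - t with hM
  set C : Set (Fin M → (Fin d → ℤ)) :=
    {v | ∃ m, 1 ≤ m ∧ m ≤ M ∧ (∑ i ∈ Finset.range m, (if h : i < M then v ⟨i, h⟩ else 0)) = 0}
    with hC
  have hDC : DSet X t 1 n = (fun ω (i : Fin M) => X (t + i) ω) ⁻¹' C := by
    ext ω
    simp only [DSet, hitCount, Set.mem_setOf_eq, Set.mem_preimage, hC]
    constructor
    · intro h
      obtain ⟨s, hs⟩ := Finset.card_pos.mp (lt_of_lt_of_le zero_lt_one h)
      rw [Finset.mem_filter, Finset.mem_Ioc] at hs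
      refine ⟨s - t, by omega, by omega, ?_⟩
      have he : ∀ i ∈ Finset.range (s - t),
          (if h : i < M then X (t + i) ω else 0) = X (t + i) ω := by
        intro i hi
        rw [Finset.mem_range] at hi
        exact dif_pos (by omega)
      rw [Finset.sum_congr rfl he]
      exact hs.2
    · rintro ⟨m, hm1, hmM, hsum⟩
      have he : ∀ i ∈ Finset.range m,
          (if h : i < M then X (t + i) ω else 0) = X (t + i) ω := by
        intro i hi
        rw [Finset.mem_range] at hi
        exact dif_pos (by omega)
      rw [Finset.sum_congr rfl he] at hsum
      have hmem : t + m ∈ (Finset.Ioc t n).filter fun s => W X t (s - t) ω = 0 := by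
        rw [Finset.mem_filter, Finset.mem_Ioc, Nat.add_sub_cancel_left]
        exact ⟨⟨by omega, by omega⟩, hsum⟩
      exact Finset.card_pos.mpr ⟨t + m, hmem⟩
  have hC0 : (fun ω (i : Fin M) => X (0 + i) ω) ⁻¹' C ⊆ (noRet X)ᶜ := by
    intro ω hω hno
    obtain ⟨m, hm1, hmM, hsum⟩ := hω
    apply hno m hm1
    have he : ∀ i ∈ Finset.range m,
        (if h : i < M then X (0 + i) ω else 0) = X i ω := by
      intro i hi
      rw [Finset.mem_range] at hi
      rw [dif_pos (by omega)]
      rw [Nat.zero_add]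
    rw [Finset.sum_congr rfl he] at hsum
    exact hsum
  calc μ (DSet X t 1 n) = μ ((fun ω (i : Fin M) => X (0 + i) ω) ⁻¹' C) := by
        rw [hDC]; exact measure_preimage_vec X hmeas hindep hident t M C
    _ ≤ μ ((noRet X)ᶜ) := measure_mono hC0
    _ = 1 - μ (noRet X) := prob_compl_eq_one_sub (measurableSet_noRet X hmeas)

lemma DSet_succ_subset (X : ℕ → Ω → (Fin d → ℤ)) (t j n : ℕ) :
    DSet X t (j + 1) n ⊆ ⋃ s ∈ Finset.Ioc t n, (FSet X t s ∩ DSet X s j n) := by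
  intro ω hω
  simp only [DSet, hitCount, Set.mem_setOf_eq] at hω
  set T := (Finset.Ioc t n).filter fun s => W X t (s - t) ω = 0 with hT
  have hTne : T.Nonempty := Finset.card_pos.mp (by omega)
  set a := T.min' hTne with ha
  have haT : a ∈ T := T.min'_mem hTne
  obtain ⟨haIoc, haW⟩ := Finset.mem_filter.mp haT
  rw [Finset.mem_Ioc] at haIoc
  refine Set.mem_iUnion₂.mpr ⟨a, Finset.mem_Ioc.mpr haIoc, ?_, ?_⟩
  · -- FSet X t a
    refine ⟨haW, fun u hu hWu => ?_⟩
    rw [Finset.mem_Ioo] at hu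
    have huT : u ∈ T := Finset.mem_filter.mpr ⟨Finset.mem_Ioc.mpr ⟨hu.1, by omega⟩, hWu⟩
    exact absurd (T.min'_le u huT) (by omega)
  · -- DSet X a j n
    show j ≤ hitCount X a n ω
    have hsub : T.erase a ⊆ (Finset.Ioc a n).filter fun u => W X a (u - a) ω = 0 := by
      intro u hu
      obtain ⟨hua, huT⟩ := Finset.mem_erase.mp hu
      obtain ⟨huIoc, huW⟩ := Finset.mem_filter.mp huT
      rw [Finset.mem_Ioc] at huIoc
      have hau : a ≤ u := T.min'_le u huT
      refine Finset.mem_filter.mpr ⟨Finset.mem_Ioc.mpr ⟨by omega, huIoc.2⟩, ?_⟩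
      rw [W_sub X (le_of_lt haIoc.1) hau ω, huW, haW, sub_zero]
    have hcard : j ≤ (T.erase a).card := by
      rw [Finset.card_erase_of_mem haT]; omega
    exact hcard.trans (Finset.card_le_card hsub)

lemma FSet_subset_DSet_one (X : ℕ → Ω → (Fin d → ℤ)) {t s n : ℕ} (hs : s ∈ Finset.Ioc t n) :
    FSet X t s ⊆ DSet X t 1 n := by
  intro ω hω
  show 1 ≤ hitCount X t n ω
  exact Finset.card_pos.mpr ⟨s, Finset.mem_filter.mpr ⟨hs, hω.1⟩⟩

lemma FSet_pairwiseDisjoint (X : ℕ → Ω → (Fin d → ℤ)) (t n : ℕ) :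
    (↑(Finset.Ioc t n) : Set ℕ).PairwiseDisjoint (FSet X t) := by
  have key : ∀ {a b : ℕ}, t < a → a < b → Disjoint (FSet X t a) (FSet X t b) := by
    intro a b hta hab
    rw [Set.disjoint_left]
    intro ω hωa hωb
    exact hωb.2 a (Finset.mem_Ioo.mpr ⟨hta, hab⟩) hωa.1
  intro s hs s' hs' hne
  simp only [Finset.coe_Ioc, Set.mem_Ioc] at hs hs'
  rcases hne.lt_or_gt with h | h
  · exact key hs.1 h
  · exact (key hs'.1 h).symm

set_option maxHeartbeats 1000000 in
lemma mu_DSet_le {μ : Measure Ω} [IsProbabilityMeasure μ] (X : ℕ → Ω → (Fin d → ℤ))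
    (hmeas : ∀ i, Measurable (X i)) (hindep : iIndepFun X μ)
    (hident : ∀ i, μ.map (X i) = μ.map (X 0)) :
    ∀ (j t n : ℕ), μ (DSet X t j n) ≤ (1 - μ (noRet X)) ^ j := by
  intro j
  induction j with
  | zero =>
    intro t n
    rw [pow_zero]
    exact prob_le_one
  | succ j ih =>
    intro t n
    calc μ (DSet X t (j + 1) n)
        ≤ μ (⋃ s ∈ Finset.Ioc t n, (FSet X t s ∩ DSet X s j n)) :=
          measure_mono (DSet_succ_subset X t j n)
      _ ≤ ∑ s ∈ Finset.Ioc t n, μ (FSet X t s ∩ DSet X s j n) :=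
          measure_biUnion_finset_le _ _
      _ = ∑ s ∈ Finset.Ioc t n, μ (FSet X t s) * μ (DSet X s j n) :=
          Finset.sum_congr rfl fun s _ => mu_FD X hindep hmeas t s j n
      _ ≤ ∑ s ∈ Finset.Ioc t n, μ (FSet X t s) * (1 - μ (noRet X)) ^ j :=
          Finset.sum_le_sum fun s _ => mul_le_mul_right (ih s n) _
      _ = (∑ s ∈ Finset.Ioc t n, μ (FSet X t s)) * (1 - μ (noRet X)) ^ j := by
          rw [Finset.sum_mul]
      _ = μ (⋃ s ∈ Finset.Ioc t n, FSet X t s) * (1 - μ (noRet X)) ^ j := by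
          have hU : μ (⋃ s ∈ Finset.Ioc t n, FSet X t s) =
              ∑ s ∈ Finset.Ioc t n, μ (FSet X t s) :=
            measure_biUnion_finset (FSet_pairwiseDisjoint X t n)
              (fun s _ => measurableSet_FSet X hmeas t s)
          rw [hU]
      _ ≤ μ (DSet X t 1 n) * (1 - μ (noRet X)) ^ j := by
          refine mul_le_mul_left (measure_mono fun ω hω => ?_) _
          obtain ⟨s, hs, hωs⟩ := Set.mem_iUnion₂.mp hω
          exact FSet_subset_DSet_one X hs hωs
      _ ≤ (1 - μ (noRet X)) * (1 - μ (noRet X)) ^ j :=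
          mul_le_mul_left (mu_DSet_one_le X hmeas hindep hident t n) _
      _ = (1 - μ (noRet X)) ^ (j + 1) := by rw [pow_succ, mul_comm]

lemma localTime_card (X : ℕ → Ω → (Fin d → ℤ)) (n : ℕ) (x : Fin d → ℤ) (ω : Ω) :
    localTime d X n x ω = ((Finset.range (n + 1)).filter fun s => walk d X s ω = x).card := by
  rw [localTime, Finset.card_filter]

lemma mlt_subset (X : ℕ → Ω → (Fin d → ℤ)) (n k : ℕ) (hk : 1 ≤ k) :
    {ω | k ≤ maxLocalTime d X n ω} ⊆ ⋃ a ∈ Finset.range (n + 1), DSet X a (k - 1) n := by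
  intro ω hω
  simp only [Set.mem_setOf_eq, maxLocalTime] at hω
  obtain ⟨i, hi, hki⟩ := (Finset.le_sup_iff (by rw [Nat.bot_eq_zero]; omega : (⊥ : ℕ) < k)).mp hω
  set x := walk d X i ω with hx
  rw [localTime_card] at hki
  set T := (Finset.range (n + 1)).filter fun s => walk d X s ω = x with hT
  have hiT : i ∈ T := Finset.mem_filter.mpr ⟨hi, rfl⟩
  have hTne : T.Nonempty := ⟨i, hiT⟩
  set a := T.min' hTne with ha
  have haT : a ∈ T := T.min'_mem hTne
  obtain ⟨haR, hax⟩ := Finset.mem_filter.mp haT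
  refine Set.mem_iUnion₂.mpr ⟨a, haR, ?_⟩
  show k - 1 ≤ hitCount X a n ω
  have hsub : T.erase a ⊆ (Finset.Ioc a n).filter fun u => W X a (u - a) ω = 0 := by
    intro u hu
    obtain ⟨hua, huT⟩ := Finset.mem_erase.mp hu
    obtain ⟨huR, hux⟩ := Finset.mem_filter.mp huT
    have hau : a ≤ u := T.min'_le u huT
    rw [Finset.mem_range] at huR
    refine Finset.mem_filter.mpr ⟨Finset.mem_Ioc.mpr ⟨by omega, by omega⟩, ?_⟩
    have hw := walk_add_W X hau ω
    rw [hux, hax] at hw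
    exact (left_eq_add.mp hw)
  have hcard : k - 1 ≤ (T.erase a).card := by
    rw [Finset.card_erase_of_mem haT]; omega
  exact hcard.trans (Finset.card_le_card hsub)

lemma mlt_bound {μ : Measure Ω} [IsProbabilityMeasure μ] (X : ℕ → Ω → (Fin d → ℤ))
    (hmeas : ∀ i, Measurable (X i)) (hindep : iIndepFun X μ)
    (hident : ∀ i, μ.map (X i) = μ.map (X 0)) (n k : ℕ) (hk : 1 ≤ k) :
    μ {ω | k ≤ maxLocalTime d X n ω} ≤ ((n + 1 : ℕ) : ℝ≥0∞) * (1 - μ (noRet X)) ^ (k - 1) := by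
  calc μ {ω | k ≤ maxLocalTime d X n ω}
      ≤ μ (⋃ a ∈ Finset.range (n + 1), DSet X a (k - 1) n) :=
        measure_mono (mlt_subset X n k hk)
    _ ≤ ∑ a ∈ Finset.range (n + 1), μ (DSet X a (k - 1) n) := measure_biUnion_finset_le _ _
    _ ≤ ∑ _a ∈ Finset.range (n + 1), (1 - μ (noRet X)) ^ (k - 1) :=
        Finset.sum_le_sum fun a _ => mu_DSet_le X hmeas hindep hident (k - 1) a n
    _ = ((n + 1 : ℕ) : ℝ≥0∞) * (1 - μ (noRet X)) ^ (k - 1) := by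
        rw [Finset.sum_const, Finset.card_range, nsmul_eq_mul]

lemma mlt_mono (X : ℕ → Ω → (Fin d → ℤ)) (ω : Ω) {n n' : ℕ} (h : n ≤ n') :
    maxLocalTime d X n ω ≤ maxLocalTime d X n' ω := by
  apply Finset.sup_le
  intro i hi
  have hi' : i ∈ Finset.range (n' + 1) := by
    rw [Finset.mem_range] at *; omega
  refine le_trans ?_ (Finset.le_sup (f := fun i => localTime d X n' (walk d X i ω) ω) hi')
  unfold localTime
  apply Finset.sum_le_sum_of_subset
  intro u hu
  rw [Finset.mem_range] at *; omega

end Stmt10Aux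

open Stmt10Aux in
/-- Almost surely, `limsup_{n→∞} l(n)/log n ≤ 1/λ_*` where `λ_* = log(1/(1-γ))`. -/
theorem stmt10
    {Ω : Type*} [MeasurableSpace Ω] (μ : Measure Ω) [IsProbabilityMeasure μ]
    (d : ℕ) (hd : 1 ≤ d)
    (X : ℕ → Ω → (Fin d → ℤ))
    (hmeas : ∀ i, Measurable (X i))
    (hindep : iIndepFun X μ)
    (hident : ∀ i, μ.map (X i) = μ.map (X 0))
    (hγ0 : 0 < noReturnProb d μ X) (hγ1 : noReturnProb d μ X < 1) :
    ∀ᵐ ω ∂μ,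
      limsup (fun n : ℕ => (maxLocalTime d X n ω : ℝ) / Real.log n) atTop ≤
        1 / Real.log (1 / (1 - noReturnProb d μ X)) := by
  classical
  have hγdef : noReturnProb d μ X = (μ (noRet X)).toReal := rfl
  set γ : ℝ := noReturnProb d μ X with hγ
  set q : ℝ := 1 - γ with hqdef
  have hq0 : 0 < q := by simp only [hqdef]; linarith
  have hq1 : q < 1 := by simp only [hqdef]; linarith
  set L : ℝ := Real.log (1 / q) with hL
  have hL0 : 0 < L := Real.log_pos (one_lt_one_div hq0 hq1)
  have hγ'top : μ (noRet X) ≠ ⊤ := measure_ne_top μ _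
  have hp : (1 : ℝ≥0∞) - μ (noRet X) = ENNReal.ofReal q := by
    have h1 : μ (noRet X) = ENNReal.ofReal γ := (ENNReal.ofReal_toReal hγ'top).symm
    rw [h1, ← ENNReal.ofReal_one, ← ENNReal.ofReal_sub 1 (le_of_lt hγ0)]
  have key : ∀ n k : ℕ, 1 ≤ k → μ {ω | k ≤ maxLocalTime d X n ω} ≤
      ENNReal.ofReal (((n + 1 : ℕ) : ℝ) * q ^ (k - 1)) := by
    intro n k hk
    calc μ {ω | k ≤ maxLocalTime d X n ω}
        ≤ ((n + 1 : ℕ) : ℝ≥0∞) * (1 - μ (noRet X)) ^ (k - 1) :=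
          mlt_bound X hmeas hindep hident n k hk
      _ = ENNReal.ofReal (((n + 1 : ℕ) : ℝ) * q ^ (k - 1)) := by
          rw [hp, ← ENNReal.ofReal_pow hq0.le, ← ENNReal.ofReal_natCast,
            ← ENNReal.ofReal_mul (Nat.cast_nonneg _)]
  have main : ∀ r : ℕ, ∀ᵐ ω ∂μ, ∀ᶠ n : ℕ in atTop,
      (maxLocalTime d X n ω : ℝ) / Real.log n ≤ 1 / L + 1 / ((r : ℝ) + 1) := by
    intro r
    have hε0 : 0 < 1 / ((r : ℝ) + 1) := by positivity
    set ε : ℝ := 1 / ((r : ℝ) + 1) with hε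
    set c : ℝ := 1 / L + ε / 2 with hc
    have hc0 : 0 < c := by positivity
    set k : ℕ → ℕ := fun m => ⌈c * (m * Real.log 2)⌉₊ + 1 with hk
    set sE : ℕ → Set Ω := fun m => {ω | k m ≤ maxLocalTime d X (2 ^ (m + 1)) ω} with hsE
    have hlog2 : 0 < Real.log 2 := Real.log_pos (by norm_num)
    set θ : ℝ := Real.exp (-(L * (ε / 2) * Real.log 2)) with hθ
    have hθ0 : 0 < θ := Real.exp_pos _
    have hθ1 : θ < 1 := by
      rw [hθ, Real.exp_lt_one_iff]
      have h0 : 0 < L * (ε / 2) * Real.log 2 := by positivity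
      linarith
    have hbound : ∀ m : ℕ, μ (sE m) ≤ ENNReal.ofReal (3 * θ ^ m) := by
      intro m
      refine (key (2 ^ (m + 1)) (k m) (by simp [hk])).trans (ENNReal.ofReal_le_ofReal ?_)
      have hkm : k m - 1 = ⌈c * (m * Real.log 2)⌉₊ := by simp [hk]
      have e3 : c * (m * Real.log 2) ≤ ((k m - 1 : ℕ) : ℝ) := by
        rw [hkm]; exact Nat.le_ceil _
      have e1 : q ^ (k m - 1) = Real.exp (((k m - 1 : ℕ) : ℝ) * Real.log q) := by
        conv_lhs => rw [← Real.exp_log hq0]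
        rw [← Real.exp_nat_mul]
      have e2 : Real.log q = -L := by rw [hL, one_div, Real.log_inv, neg_neg]
      have e4 : q ^ (k m - 1) ≤ Real.exp (-(c * (m * Real.log 2) * L)) := by
        rw [e1, e2]
        apply Real.exp_le_exp.mpr
        have h5 := mul_le_mul_of_nonneg_right e3 hL0.le
        nlinarith
      have hLne : L ≠ 0 := ne_of_gt hL0
      have hcL : c * L = 1 + L * (ε / 2) := by
        rw [hc]; field_simp
      have e5 : Real.exp (-(c * (m * Real.log 2) * L)) = ((2 : ℝ) ^ m)⁻¹ * θ ^ m := by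
        have harg : -(c * ((m : ℝ) * Real.log 2) * L) =
            -((m : ℝ) * Real.log 2) + (m : ℝ) * (-(L * (ε / 2) * Real.log 2)) := by
          have h7 : c * ((m : ℝ) * Real.log 2) * L = ((m : ℝ) * Real.log 2) * (c * L) := by
            ring
          rw [h7, hcL]; ring
        rw [hθ, harg, Real.exp_add, Real.exp_neg, Real.exp_nat_mul, Real.exp_nat_mul,
          Real.exp_log (by norm_num : (0 : ℝ) < 2)]
      have e6 : ((2 ^ (m + 1) + 1 : ℕ) : ℝ) ≤ 3 * 2 ^ m := by
        have h1 : (1 : ℝ) ≤ 2 ^ m := one_le_pow₀ (by norm_num)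
        push_cast
        rw [pow_succ]
        linarith
      calc ((2 ^ (m + 1) + 1 : ℕ) : ℝ) * q ^ (k m - 1)
          ≤ (3 * 2 ^ m) * (((2 : ℝ) ^ m)⁻¹ * θ ^ m) :=
            mul_le_mul e6 (e4.trans_eq e5) (pow_nonneg hq0.le _) (by positivity)
        _ = 3 * θ ^ m := by
            field_simp
    have hsum : (∑' m, μ (sE m)) ≠ ⊤ := by
      have h1 : ∀ m : ℕ, ENNReal.ofReal (3 * θ ^ m) =
          ENNReal.ofReal 3 * (ENNReal.ofReal θ) ^ m := by
        intro m; rw [ENNReal.ofReal_mul (by norm_num), ENNReal.ofReal_pow hθ0.le]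
      have h2 : (∑' m : ℕ, ENNReal.ofReal (3 * θ ^ m)) ≠ ⊤ := by
        rw [tsum_congr h1, ENNReal.tsum_mul_left, ENNReal.tsum_geometric]
        refine ENNReal.mul_ne_top ENNReal.ofReal_ne_top (ENNReal.inv_ne_top.mpr fun h0 => ?_)
        exact absurd (tsub_eq_zero_iff_le.mp h0) (not_le.mpr (ENNReal.ofReal_lt_one.mpr hθ1))
      exact ne_top_of_le_ne_top h2 (ENNReal.tsum_le_tsum hbound)
    filter_upwards [MeasureTheory.ae_eventually_notMem hsum] with ω hω
    rw [eventually_atTop] at hω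
    obtain ⟨M₀, hM₀⟩ := hω
    have hlogT : Tendsto (fun n : ℕ => Real.log n) atTop atTop :=
      Real.tendsto_log_atTop.comp tendsto_natCast_atTop_atTop
    filter_upwards [eventually_ge_atTop (2 ^ M₀), hlogT.eventually_ge_atTop (2 / ε)]
      with n hn1 hn2
    have hn0 : n ≠ 0 := by
      have h1 : (1 : ℕ) ≤ 2 ^ M₀ := Nat.one_le_two_pow
      omega
    set m := Nat.log 2 n with hm
    have hmM₀ : M₀ ≤ m := by
      have h1 : Nat.log 2 (2 ^ M₀) ≤ Nat.log 2 n := Nat.log_mono_right hn1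
      rwa [Nat.log_pow (by norm_num)] at h1
    have hnm : n < 2 ^ (m + 1) := Nat.lt_pow_succ_log_self (by norm_num) n
    have hmn : 2 ^ m ≤ n := Nat.pow_log_le_self 2 hn0
    have hnot : ¬ (k m ≤ maxLocalTime d X (2 ^ (m + 1)) ω) := hM₀ m hmM₀
    have hle1 : maxLocalTime d X n ω ≤ maxLocalTime d X (2 ^ (m + 1)) ω :=
      mlt_mono X ω (le_of_lt hnm)
    have hle2 : (maxLocalTime d X n ω : ℝ) ≤ c * (m * Real.log 2) + 1 := by
      have hkm : k m = ⌈c * ((m : ℝ) * Real.log 2)⌉₊ + 1 := rfl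
      have h1 : maxLocalTime d X n ω ≤ ⌈c * ((m : ℝ) * Real.log 2)⌉₊ := by
        have h2 := not_le.mp hnot
        omega
      have h2 : (⌈c * ((m : ℝ) * Real.log 2)⌉₊ : ℝ) < c * ((m : ℝ) * Real.log 2) + 1 :=
        Nat.ceil_lt_add_one (by positivity)
      calc (maxLocalTime d X n ω : ℝ) ≤ (⌈c * ((m : ℝ) * Real.log 2)⌉₊ : ℝ) := by
            exact_mod_cast h1
        _ ≤ c * ((m : ℝ) * Real.log 2) + 1 := le_of_lt h2
    have h4 : (m : ℝ) * Real.log 2 ≤ Real.log n := by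
      have hcast : ((2 : ℝ)) ^ m ≤ (n : ℝ) := by exact_mod_cast hmn
      calc (m : ℝ) * Real.log 2 = Real.log ((2 : ℝ) ^ m) := (Real.log_pow (n := m) (x := 2)).symm
        _ ≤ Real.log n := Real.log_le_log (by positivity) hcast
    have hlogn : 0 < Real.log n := lt_of_lt_of_le (by positivity) hn2
    have hbnd : (maxLocalTime d X n ω : ℝ) ≤ c * Real.log n + 1 := by
      have h5 := mul_le_mul_of_nonneg_left h4 hc0.le
      linarith
    have hdiv : (maxLocalTime d X n ω : ℝ) / Real.log n ≤ c + 1 / Real.log n := by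
      have h5 : (maxLocalTime d X n ω : ℝ) / Real.log n ≤
          (c * Real.log n + 1) / Real.log n := by gcongr
      rwa [add_div, mul_div_cancel_right₀ _ (ne_of_gt hlogn)] at h5
    have h6 : 1 / Real.log n ≤ ε / 2 := by
      have h7 := one_div_le_one_div_of_le (by positivity : (0 : ℝ) < 2 / ε) hn2
      rwa [one_div_div] at h7
    have hcc : c = 1 / L + ε / 2 := hc
    linarith
  filter_upwards [ae_all_iff.mpr main] with ω hω
  have hub : ∀ r : ℕ, limsup (fun n : ℕ => (maxLocalTime d X n ω : ℝ) / Real.log n) atTop ≤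
      1 / L + 1 / ((r : ℝ) + 1) := by
    intro r
    refine limsup_le_of_le ?_ (hω r)
    exact Filter.isCoboundedUnder_le_of_le atTop
      (fun n => div_nonneg (Nat.cast_nonneg _) (Real.log_natCast_nonneg n))
  have hlim : Tendsto (fun r : ℕ => 1 / L + 1 / ((r : ℝ) + 1)) atTop (nhds (1 / L)) := by
    have := tendsto_const_nhds (x := 1 / L) (f := atTop (α := ℕ)) |>.add
      tendsto_one_div_add_atTop_nhds_zero_nat
    simpa using this
  exact ge_of_tendsto' hlim hub

end
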